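/- Let k ≥ 2 be an even integer and let U_k = (1/√2)·[[1, e^{−iπ/k}], [−e^{iπ/k}, 1]]. Then the state obtained by applying U_k ⊗ I (U_k on the cat-state qubit, identity on a fresh ancilla qubit in state |0⟩) at each of k sites to the 2k-qubit state (|00⟩^{⊗k}+|10⟩^{⊗k})/√2 is inconsistent; equivalently, writing W = U_k ⊗ I as a 4×4 matrix with rows and columns indexed by two-bit strings 00,01,10,11 (encoded as 0,1,2,3), the amplitude (1/√2)(∏_{i=1}^k W_{y_i,0} + ∏_{i=1}^k W_{y_i,2}) vanishes whenever y ∈ {0,1,2,3}^k is a constant string. -/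

import Mathlib

open Matrix

/-- The 2×2 complex matrix `U_k = (1/√2)·[[1, e^{−iπ/k}], [−e^{iπ/k}, 1]]`. -/
noncomputable def UkMat (k : ℕ) : Matrix (Fin 2) (Fin 2) ℂ :=
  (1 / (Real.sqrt 2 : ℂ)) •
    !![1, Complex.exp (-(Complex.I * ((Real.pi : ℂ) / (k : ℂ))));
      -Complex.exp (Complex.I * ((Real.pi : ℂ) / (k : ℂ))), 1]

/-- The encoding of a pair of bits `(b₁, b₂)` as the two-bit string `b₁b₂ ∈ {0,1,2,3}`. -/
def bitPairEquiv : Fin 2 × Fin 2 ≃ Fin 4 where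
  toFun p := ⟨2 * p.1.val + p.2.val, by have := p.1.isLt; have := p.2.isLt; omega⟩
  invFun i := (⟨i.val / 2, by have := i.isLt; omega⟩, ⟨i.val % 2, by omega⟩)
  left_inv := by decide
  right_inv := by decide

/-- `W = U_k ⊗ I` as a 4×4 matrix with rows and columns indexed by two-bit strings
`00,01,10,11` (encoded as `0,1,2,3`). -/
noncomputable def WMat (k : ℕ) : Matrix (Fin 4) (Fin 4) ℂ :=
  Matrix.reindex bitPairEquiv bitPairEquiv
    (Matrix.kroneckerMap (· * ·) (UkMat k) (1 : Matrix (Fin 2) (Fin 2) ℂ))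

/-- For an even integer `k ≥ 2`, applying `U_k ⊗ I` at each of `k` sites to
`(|00⟩^{⊗k}+|10⟩^{⊗k})/√2` yields an inconsistent state: the amplitude
`(1/√2)(∏ᵢ W_{yᵢ,00} + ∏ᵢ W_{yᵢ,10})` vanishes on every constant string
`y ∈ {00,01,10,11}^k`. -/
theorem Uk_tensor_id_cat_inconsistent (k : ℕ) (hk : 2 ≤ k) (hke : Even k) :
    ∀ y : Fin k → Fin 4, (∃ c : Fin 4, ∀ i, y i = c) →
      (1 / (Real.sqrt 2 : ℂ)) * ((∏ i, WMat k (y i) 0) + ∏ i, WMat k (y i) 2) = 0 := by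
  rintro y ⟨c, hc⟩
  have hkn : k ≠ 0 := by omega
  have hk0 : (k : ℂ) ≠ 0 := Nat.cast_ne_zero.mpr hkn
  have hprod : ∀ b : Fin 4, ∏ i, WMat k (y i) b = (WMat k c b) ^ k := by
    intro b
    rw [Finset.prod_congr rfl (fun i _ => by rw [hc i]), Finset.prod_const,
      Finset.card_univ, Fintype.card_fin]
  rw [hprod, hprod]
  have he : Complex.exp (-(Complex.I * ((Real.pi : ℂ) / (k : ℂ)))) ^ k = -1 := by
    rw [← Complex.exp_nat_mul]
    have h : (k : ℂ) * -(Complex.I * ((Real.pi : ℂ) / (k : ℂ)))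
        = -((Real.pi : ℂ) * Complex.I) := by field_simp
    rw [h, Complex.exp_neg, Complex.exp_pi_mul_I]
    norm_num
  have he' : Complex.exp (Complex.I * ((Real.pi : ℂ) / (k : ℂ))) ^ k = -1 := by
    rw [← Complex.exp_nat_mul]
    have h : (k : ℂ) * (Complex.I * ((Real.pi : ℂ) / (k : ℂ)))
        = (Real.pi : ℂ) * Complex.I := by field_simp
    rw [h, Complex.exp_pi_mul_I]
  fin_cases c
  · show (1 / (Real.sqrt 2 : ℂ)) * (WMat k 0 0 ^ k + WMat k 0 2 ^ k) = 0
    have h1 : WMat k 0 0 = 1 / (Real.sqrt 2 : ℂ) := by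
      simp [WMat, UkMat, bitPairEquiv, Matrix.reindex, Matrix.kroneckerMap, Matrix.one_apply]
    have h2 : WMat k 0 2 = (1 / (Real.sqrt 2 : ℂ)) *
        Complex.exp (-(Complex.I * ((Real.pi : ℂ) / (k : ℂ)))) := by
      simp [WMat, UkMat, bitPairEquiv, Matrix.reindex, Matrix.kroneckerMap, Matrix.one_apply]
    rw [h1, h2, mul_pow, he]
    ring
  · show (1 / (Real.sqrt 2 : ℂ)) * (WMat k 1 0 ^ k + WMat k 1 2 ^ k) = 0
    have h1 : WMat k 1 0 = 0 := by
      simp [WMat, UkMat, bitPairEquiv, Matrix.reindex, Matrix.kroneckerMap, Matrix.one_apply]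
    have h2 : WMat k 1 2 = 0 := by
      simp [WMat, UkMat, bitPairEquiv, Matrix.reindex, Matrix.kroneckerMap, Matrix.one_apply]
    rw [h1, h2, zero_pow hkn]
    ring
  · show (1 / (Real.sqrt 2 : ℂ)) * (WMat k 2 0 ^ k + WMat k 2 2 ^ k) = 0
    have h1 : WMat k 2 0 = (1 / (Real.sqrt 2 : ℂ)) *
        (-Complex.exp (Complex.I * ((Real.pi : ℂ) / (k : ℂ)))) := by
      simp [WMat, UkMat, bitPairEquiv, Matrix.reindex, Matrix.kroneckerMap, Matrix.one_apply]
    have h2 : WMat k 2 2 = 1 / (Real.sqrt 2 : ℂ) := by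
      simp [WMat, UkMat, bitPairEquiv, Matrix.reindex, Matrix.kroneckerMap, Matrix.one_apply]
    rw [h1, h2, mul_pow, neg_pow, he', hke.neg_one_pow]
    ring
  · show (1 / (Real.sqrt 2 : ℂ)) * (WMat k 3 0 ^ k + WMat k 3 2 ^ k) = 0
    have h1 : WMat k 3 0 = 0 := by
      simp [WMat, UkMat, bitPairEquiv, Matrix.reindex, Matrix.kroneckerMap, Matrix.one_apply]
    have h2 : WMat k 3 2 = 0 := by
      simp [WMat, UkMat, bitPairEquiv, Matrix.reindex, Matrix.kroneckerMap, Matrix.one_apply]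
    rw [h1, h2, zero_pow hkn]
    ring
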